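/- Let A be an n×n real M-matrix with positive diagonal entries (i.e. A is an L-matrix that is invertible with A^{-1} ≥ 0 componentwise). Write A = D − E − F, where D is the diagonal part of A, −E is the strictly lower triangular part, and −F is the strictly upper triangular part. Then the Gauss–Seidel iteration matrix satisfies ρ((D − E)^{-1} F) < 1; in particular, the Gauss–Seidel iteration for A x = b converges for every initial vector. -/

import Mathlib

open Matrix Finset

theorem mmatrix_gauss_seidel_spectral_radius_lt_one {n : ℕ} (A : Matrix (Fin n) (Fin n) ℝ)
    (hZ : ∀ i j, i ≠ j → A i j ≤ 0)
    (hL : ∀ i, 0 < A i i)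
    (hA : IsUnit A) (hinv : ∀ i j, 0 ≤ A⁻¹ i j) :
    ∀ (μ : ℂ) (v : Fin n → ℂ), v ≠ 0 →
      (((Matrix.of fun i j : Fin n => if j ≤ i then A i j else 0)⁻¹ *
          (Matrix.of fun i j : Fin n => if i < j then -A i j else 0)).map
        (fun a : ℝ => (a : ℂ))).mulVec v = μ • v →
      ‖μ‖ < 1 := by
  intro μ v hv heig
  by_contra hcon
  push_neg at hcon
  have hμ : μ ≠ 0 := by
    intro h; rw [h] at hcon; simp at hcon; linarith
  have hμabs : (0:ℝ) < ‖μ‖ := lt_of_lt_of_le one_pos hcon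
  set L : Matrix (Fin n) (Fin n) ℝ := Matrix.of fun i j : Fin n => if j ≤ i then A i j else 0 with hLdef
  set F : Matrix (Fin n) (Fin n) ℝ := Matrix.of fun i j : Fin n => if i < j then -A i j else 0 with hFdef
  have hLdet : L.det = ∏ i, A i i := by
    rw [Matrix.det_of_lowerTriangular L]
    · simp [hLdef]
    · intro i j hij
      simp only [hLdef, Matrix.of_apply]
      rw [if_neg]
      exact not_le.2 (by exact_mod_cast hij)
  have hLdetu : IsUnit L.det := by
    rw [hLdet]
    exact (Finset.prod_pos (fun i _ => hL i)).ne'.isUnit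
  have hLL : L.map Complex.ofRealHom * (L⁻¹).map Complex.ofRealHom = 1 := by
    rw [← Matrix.map_mul, Matrix.mul_nonsing_inv L hLdetu, Matrix.map_one]
    · exact map_zero _
    · exact map_one _
  have key : (F.map Complex.ofRealHom).mulVec v = μ • (L.map Complex.ofRealHom).mulVec v := by
    have h1 : ((L⁻¹ * F).map Complex.ofRealHom).mulVec v = μ • v := heig
    rw [Matrix.map_mul] at h1
    have h2 := congrArg (fun w => (L.map Complex.ofRealHom).mulVec w) h1
    simp only [Matrix.mulVec_mulVec] at h2
    rw [← Matrix.mul_assoc, hLL, Matrix.one_mul] at h2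
    rw [h2, Matrix.mulVec_smul]
  set u : Fin n → ℝ := fun i => ‖v i‖ with hudef
  have hu0 : ∀ i, 0 ≤ u i := fun i => norm_nonneg _
  have hAu : ∀ i, A.mulVec u i ≤ 0 := by
    intro i
    have hk := congrFun key i
    simp only [Matrix.mulVec, dotProduct, Matrix.map_apply, Pi.smul_apply,
      smul_eq_mul, Finset.mul_sum] at hk
    have hsplit : ∀ (g : Fin n → ℂ), ∑ j, g j = g i + ∑ j ∈ univ.erase i, g j := by
      intro g
      rw [Finset.add_sum_erase _ _ (mem_univ i)]
    rw [hsplit, hsplit (fun j => μ * _)] at hk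
    have hFdiag : (Complex.ofRealHom (F i i)) * v i = 0 := by
      simp [hFdef]
    have hLdiag : (Complex.ofRealHom (L i i)) = (A i i : ℂ) := by
      simp [hLdef]
    rw [hFdiag, hLdiag, zero_add] at hk
    have hkey : μ * (A i i : ℂ) * v i =
        ∑ j ∈ univ.erase i, ((Complex.ofRealHom (F i j)) - μ * (Complex.ofRealHom (L i j))) * v j := by
      simp only [sub_mul]
      rw [Finset.sum_sub_distrib]
      simp only [← mul_assoc] at hk
      linear_combination -hk
    -- take absolute values
    have habs : ‖μ‖ * (A i i * u i) ≤
        ∑ j ∈ univ.erase i, ‖μ‖ * ((-A i j) * u j) := by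
      have h1 : ‖μ‖ * (A i i * u i) =
          ‖μ * (A i i : ℂ) * v i‖ := by
        simp only [hudef, norm_mul, Complex.norm_real, Real.norm_eq_abs, abs_of_pos (hL i)]
        ring
      rw [h1, hkey]
      refine le_trans (norm_sum_le _ _) ?_
      refine Finset.sum_le_sum ?_
      intro j hj
      have hji : j ≠ i := Finset.ne_of_mem_erase hj
      have hZij : A i j ≤ 0 := hZ i j (Ne.symm hji)
      rw [norm_mul]
      have huj : ‖v j‖ = u j := rfl
      rw [huj]
      rw [← mul_assoc]
      apply mul_le_mul_of_nonneg_right _ (hu0 j)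
      rcases lt_or_gt_of_ne hji with hlt | hgt
      · -- j < i : F i j = 0, L i j = A i j
        have hF0 : F i j = 0 := by
          simp only [hFdef, Matrix.of_apply]
          rw [if_neg (by exact not_lt.2 (le_of_lt (by exact_mod_cast hlt)))]
        have hL1 : L i j = A i j := by
          simp only [hLdef, Matrix.of_apply]
          rw [if_pos (le_of_lt (by exact_mod_cast hlt))]
        rw [hF0, hL1]
        simp only [map_zero, zero_sub, norm_neg, norm_mul,
          Complex.ofRealHom_eq_coe, Complex.norm_real, Real.norm_eq_abs]
        rw [abs_of_nonpos hZij]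
      · -- i < j : F i j = -A i j, L i j = 0
        have hF1 : F i j = -A i j := by
          simp only [hFdef, Matrix.of_apply]
          rw [if_pos (by exact_mod_cast hgt)]
        have hL0 : L i j = 0 := by
          simp only [hLdef, Matrix.of_apply]
          rw [if_neg (by exact not_le.2 (by exact_mod_cast hgt))]
        rw [hF1, hL0]
        simp only [map_zero, mul_zero, sub_zero, Complex.ofRealHom_eq_coe, Complex.norm_real, Real.norm_eq_abs]
        rw [abs_of_nonneg (by linarith)]
        nlinarith [hcon]
    -- divide by |μ|
    have habs2 : A i i * u i ≤ ∑ j ∈ univ.erase i, (-A i j) * u j := by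
      rw [← Finset.mul_sum] at habs
      exact le_of_mul_le_mul_left habs hμabs
    -- assemble
    have : A.mulVec u i = A i i * u i + ∑ j ∈ univ.erase i, A i j * u j := by
      simp only [Matrix.mulVec, dotProduct]
      exact (Finset.add_sum_erase _ _ (mem_univ i)).symm
    rw [this]
    have : ∑ j ∈ univ.erase i, A i j * u j = - ∑ j ∈ univ.erase i, (-A i j) * u j := by
      rw [← Finset.sum_neg_distrib]
      apply Finset.sum_congr rfl
      intro j _; ring
    rw [this]
    linarith
  -- now conclude u = 0
  have hAdet : IsUnit A.det := (Matrix.isUnit_iff_isUnit_det A).mp hA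
  have hui : ∀ i, u i ≤ 0 := by
    intro i
    have h1 : u i = ((A⁻¹ * A).mulVec u) i := by
      rw [Matrix.nonsing_inv_mul A hAdet, Matrix.one_mulVec]
    rw [h1, ← Matrix.mulVec_mulVec]
    simp only [Matrix.mulVec, dotProduct]
    apply Finset.sum_nonpos
    intro j _
    exact mul_nonpos_of_nonneg_of_nonpos (hinv i j) (hAu j)
  apply hv
  funext i
  have : u i = 0 := le_antisymm (hui i) (hu0 i)
  simpa [hudef, norm_eq_zero] using this
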